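/- arXiv:2012.04866 — 3 statements merged into one kernel-verified Lean document; each statement's English description precedes it below -/
import Mathlib

section
/- Suppose Π : ℝ → ℝ^{3n×3n} is differentiable on [0,T] and satisfies the matrix Riccati ODE −Π̇(t) = Π(t)𝔸(t) + 𝔸(t)ᵀΠ(t) − Π(t)𝔹R⁻¹𝔹ᵀΠ(t) + ℚ for all t ∈ [0,T], with terminal condition Π(T) = 0. Then its top-left n×n block Π₁₁(t) satisfies the reduced n×n Riccati ODE −Π̇₁₁(t) = Π₁₁(t)A + AᵀΠ₁₁(t) − Π₁₁(t)BR⁻¹BᵀΠ₁₁(t) + Q for all t ∈ [0,T], with Π₁₁(T) = 0. -/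
open Matrix Set

/-- The top-left `n×n` block `Π₁₁` of a solution `Π` of the `3n×3n`
extended Riccati ODE satisfies the reduced `n×n` Riccati ODE. -/
theorem nce_riccati_top_left_block
    (n m : ℕ) (hn : 0 < n) (hm : 0 < m) (T : ℝ) (hT : 0 < T)
    (A F G Q H Hhat : Matrix (Fin n) (Fin n) ℝ)
    (B : Matrix (Fin n) (Fin m) ℝ)
    (R : Matrix (Fin m) (Fin m) ℝ) (hR : IsUnit R.det)
    (A₂ : ℝ → Matrix (Fin n ⊕ Fin n) (Fin n ⊕ Fin n) ℝ)
    (hA₂ : Continuous A₂)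
    -- extended coefficients
    (𝓐 : ℝ → Matrix (Fin n ⊕ (Fin n ⊕ Fin n)) (Fin n ⊕ (Fin n ⊕ Fin n)) ℝ)
    (h𝓐 : ∀ t, 𝓐 t = Matrix.fromBlocks A (Matrix.fromCols G F) 0 (A₂ t))
    (𝓑 : Matrix (Fin n ⊕ (Fin n ⊕ Fin n)) (Fin m) ℝ)
    (h𝓑 : 𝓑 = Matrix.fromRows B 0)
    (𝓠 : Matrix (Fin n ⊕ (Fin n ⊕ Fin n)) (Fin n ⊕ (Fin n ⊕ Fin n)) ℝ)
    (h𝓠 : 𝓠 = (Matrix.fromCols (1 : Matrix (Fin n) (Fin n) ℝ)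
          (Matrix.fromCols (-H) (-Hhat)))ᵀ * Q *
        Matrix.fromCols (1 : Matrix (Fin n) (Fin n) ℝ)
          (Matrix.fromCols (-H) (-Hhat)))
    -- the solution of the extended Riccati equation
    (P : ℝ → Matrix (Fin n ⊕ (Fin n ⊕ Fin n)) (Fin n ⊕ (Fin n ⊕ Fin n)) ℝ)
    (hODE : ∀ t ∈ Icc (0 : ℝ) T, ∀ i j, HasDerivAt (fun τ => P τ i j)
      ((-(P t * 𝓐 t + (𝓐 t)ᵀ * P t - P t * 𝓑 * R⁻¹ * 𝓑ᵀ * P t + 𝓠)) i j) t)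
    (hterm : P T = 0) :
    (∀ t ∈ Icc (0 : ℝ) T, ∀ i j, HasDerivAt (fun τ => (P τ).toBlocks₁₁ i j)
      ((-((P t).toBlocks₁₁ * A + Aᵀ * (P t).toBlocks₁₁
          - (P t).toBlocks₁₁ * B * R⁻¹ * Bᵀ * (P t).toBlocks₁₁ + Q)) i j) t)
      ∧ (P T).toBlocks₁₁ = 0 := by
  constructor
  · intro t ht i j
    have h := hODE t ht (Sum.inl i) (Sum.inl j)
    have key : (-(P t * 𝓐 t + (𝓐 t)ᵀ * P t - P t * 𝓑 * R⁻¹ * 𝓑ᵀ * P t + 𝓠))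
        (Sum.inl i) (Sum.inl j)
        = (-((P t).toBlocks₁₁ * A + Aᵀ * (P t).toBlocks₁₁
          - (P t).toBlocks₁₁ * B * R⁻¹ * Bᵀ * (P t).toBlocks₁₁ + Q)) i j := by
      simp only [h𝓐, h𝓑, h𝓠, Matrix.neg_apply, Matrix.add_apply, Matrix.sub_apply,
        Matrix.mul_apply, Matrix.toBlocks₁₁, Matrix.of_apply, Matrix.transpose_apply,
        Matrix.fromBlocks, Matrix.fromCols,
        Matrix.fromRows_apply_inl, Matrix.fromRows_apply_inr,
        Fintype.sum_sum_type, Sum.elim_inl, Sum.elim_inr,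
        Matrix.zero_apply, Matrix.one_apply, mul_zero, zero_mul,
        Finset.sum_const_zero, add_zero, zero_add, ite_mul, mul_ite, one_mul, mul_one,
        Finset.sum_ite_eq, Finset.sum_ite_eq', Finset.mem_univ, if_true]
    simpa [Matrix.toBlocks₁₁, key] using h
  · ext i j
    simp [hterm, Matrix.toBlocks₁₁]
end

section
/- In the setting of the major-agent conjugation (with 𝔸₀(t), 𝕃(t), 𝕊(t) defined from continuous S, Π₁₂, Π₁₃ : ℝ → ℝ^{n×n} as Ā(t) = A + F − B(2R)⁻¹Bᵀ(S(t) + Π₁₃(t)), Ḡ(t) = G − B(2R)⁻¹BᵀΠ₁₂(t), 𝔸₀(t) = [[A₀, F₀], [Ḡ(t), Ā(t)]], 𝕊(t) = [Π₁₃(t) Π₁₂(t)], 𝕃(t) = [[A + F − B(2R)⁻¹BᵀS(t), G], [F₀, A₀]]), let Π₀ : ℝ → ℝ^{2n×2n} and s₁ : ℝ → ℝⁿ be continuous, set K(t) := 𝔦Π₀(t)𝔦 and 𝕄₀(t) := [0; −B(2R)⁻¹Bᵀs₁(t)] ∈ ℝ^{2n}. Then a differentiable s₀ : ℝ → ℝ^{2n}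 satisfies −ṡ₀(t) = (𝔸₀(t)ᵀ − Π₀(t)𝔹₀(2R₀)⁻¹𝔹₀ᵀ)s₀(t) + Π₀(t)𝕄₀(t) − 2η̄₀ on [0,T] with s₀(T) = 0 if and only if k := 𝔦s₀ satisfies −k̇(t) = (𝕃(t) − 𝔹̄(2R)⁻¹Bᵀ𝕊(t))ᵀk(t) − K(t)𝔹̄₀(2R₀)⁻¹𝔹̄₀ᵀk(t) − K(t)𝔹̄(2R)⁻¹Bᵀs₁(t) + 2f₀ on [0,T] with k(T) = 0. -/
open Matrix Set

open Matrix in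
private lemma myFromBlocks_sub {l m n o : Type*} (A A' : Matrix n l ℝ) (B B' : Matrix n m ℝ)
    (C C' : Matrix o l ℝ) (D D' : Matrix o m ℝ) :
    fromBlocks A B C D - fromBlocks A' B' C' D' =
      fromBlocks (A - A') (B - B') (C - C') (D - D') := by
  rw [sub_eq_add_neg, Matrix.fromBlocks_neg, Matrix.fromBlocks_add]
  simp [sub_eq_add_neg]

/-- The major agent's offset consistency equation of the Nash
certainty equivalence approach is equivalent, after multiplication by the
block-swap matrix `𝔦`, to the offset consistency equation `(32)` of the
probabilistic approach. -/
theorem major_offset_equivalence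
    (n m : ℕ) (hn : 0 < n) (hm : 0 < m) (T : ℝ) (hT : 0 < T)
    (A₀ F₀ A F G Q₀ H₀ : Matrix (Fin n) (Fin n) ℝ)
    (B₀ B : Matrix (Fin n) (Fin m) ℝ)
    (R₀ R : Matrix (Fin m) (Fin m) ℝ) (hR₀ : IsUnit R₀.det) (hR : IsUnit R.det)
    (η₀ : Fin n → ℝ)
    (S P₁₂ P₁₃ : ℝ → Matrix (Fin n) (Fin n) ℝ)
    (hS : Continuous S) (hP₁₂ : Continuous P₁₂) (hP₁₃ : Continuous P₁₃)
    (Abar : ℝ → Matrix (Fin n) (Fin n) ℝ)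
    (hAbar : ∀ t, Abar t = A + F - B * ((2 : ℝ) • R)⁻¹ * Bᵀ * (S t + P₁₃ t))
    (Gbar : ℝ → Matrix (Fin n) (Fin n) ℝ)
    (hGbar : ∀ t, Gbar t = G - B * ((2 : ℝ) • R)⁻¹ * Bᵀ * P₁₂ t)
    (𝓐₀ : ℝ → Matrix (Fin n ⊕ Fin n) (Fin n ⊕ Fin n) ℝ)
    (h𝓐₀ : ∀ t, 𝓐₀ t = Matrix.fromBlocks A₀ F₀ (Gbar t) (Abar t))
    (𝓢 : ℝ → Matrix (Fin n) (Fin n ⊕ Fin n) ℝ)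
    (h𝓢 : ∀ t, 𝓢 t = Matrix.fromCols (P₁₃ t) (P₁₂ t))
    (𝓛 : ℝ → Matrix (Fin n ⊕ Fin n) (Fin n ⊕ Fin n) ℝ)
    (h𝓛 : ∀ t, 𝓛 t = Matrix.fromBlocks (A + F - B * ((2 : ℝ) • R)⁻¹ * Bᵀ * S t) G F₀ A₀)
    (𝓑₀ : Matrix (Fin n ⊕ Fin n) (Fin m) ℝ) (h𝓑₀ : 𝓑₀ = Matrix.fromRows B₀ 0)
    (𝓑bar : Matrix (Fin n ⊕ Fin n) (Fin m) ℝ) (h𝓑bar : 𝓑bar = Matrix.fromRows B 0)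
    (𝓑bar₀ : Matrix (Fin n ⊕ Fin n) (Fin m) ℝ) (h𝓑bar₀ : 𝓑bar₀ = Matrix.fromRows 0 B₀)
    (ηbar₀ : (Fin n ⊕ Fin n) → ℝ)
    (hηbar₀ : ηbar₀ = Sum.elim (Q₀ *ᵥ η₀) (-(H₀ᵀ *ᵥ (Q₀ *ᵥ η₀))))
    (f₀ : (Fin n ⊕ Fin n) → ℝ)
    (hf₀ : f₀ = Sum.elim (H₀ᵀ *ᵥ (Q₀ *ᵥ η₀)) (-(Q₀ *ᵥ η₀)))
    (J : Matrix (Fin n ⊕ Fin n) (Fin n ⊕ Fin n) ℝ)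
    (hJ : J = Matrix.fromBlocks 0 (1 : Matrix (Fin n) (Fin n) ℝ)
        (1 : Matrix (Fin n) (Fin n) ℝ) 0)
    (P₀ : ℝ → Matrix (Fin n ⊕ Fin n) (Fin n ⊕ Fin n) ℝ) (hP₀ : Continuous P₀)
    (s₁ : ℝ → Fin n → ℝ) (hs₁ : Continuous s₁)
    (K : ℝ → Matrix (Fin n ⊕ Fin n) (Fin n ⊕ Fin n) ℝ)
    (hK : ∀ t, K t = J * P₀ t * J)
    (𝓜₀ : ℝ → (Fin n ⊕ Fin n) → ℝ)
    (h𝓜₀ : ∀ t, 𝓜₀ t = Sum.elim (fun _ => (0 : ℝ))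
        (-((B * ((2 : ℝ) • R)⁻¹ * Bᵀ) *ᵥ s₁ t)))
    (s₀ : ℝ → (Fin n ⊕ Fin n) → ℝ)
    (hdiff : ∀ t ∈ Icc (0 : ℝ) T, ∀ i, DifferentiableAt ℝ (fun τ => s₀ τ i) t)
    (k : ℝ → (Fin n ⊕ Fin n) → ℝ)
    (hk : ∀ t, k t = J *ᵥ s₀ t) :
    ((∀ t ∈ Icc (0 : ℝ) T, ∀ i, HasDerivAt (fun τ => s₀ τ i)
        ((-(((𝓐₀ t)ᵀ - P₀ t * 𝓑₀ * ((2 : ℝ) • R₀)⁻¹ * 𝓑₀ᵀ) *ᵥ s₀ t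
            + P₀ t *ᵥ 𝓜₀ t - (2 : ℝ) • ηbar₀)) i) t)
      ∧ s₀ T = 0)
    ↔ ((∀ t ∈ Icc (0 : ℝ) T, ∀ i, HasDerivAt (fun τ => k τ i)
        ((-((𝓛 t - 𝓑bar * ((2 : ℝ) • R)⁻¹ * Bᵀ * 𝓢 t)ᵀ *ᵥ k t
            - (K t * 𝓑bar₀ * ((2 : ℝ) • R₀)⁻¹ * 𝓑bar₀ᵀ) *ᵥ k t
            - (K t * 𝓑bar * ((2 : ℝ) • R)⁻¹ * Bᵀ) *ᵥ s₁ t + (2 : ℝ) • f₀)) i) t)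
      ∧ k T = 0) := by
  
  classical
  -- abbreviations
  have hJJ : J * J = 1 := by
    rw [hJ]
    simp [Matrix.fromBlocks_multiply, Matrix.fromBlocks_one]
  have hJT : Jᵀ = J := by
    rw [hJ, Matrix.fromBlocks_transpose]
    simp
  have hswap : ∀ (v : (Fin n ⊕ Fin n) → ℝ) (i : Fin n ⊕ Fin n),
      (J *ᵥ v) i = v (Sum.elim Sum.inr Sum.inl i) := by
    intro v i
    rw [hJ]
    cases i with
    | inl a =>
      simp [Matrix.fromBlocks_mulVec]
    | inr a =>
      simp [Matrix.fromBlocks_mulVec]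
  -- identity M1
  have hM1 : ∀ t, J * (𝓐₀ t)ᵀ * J = (𝓛 t - 𝓑bar * ((2 : ℝ) • R)⁻¹ * Bᵀ * 𝓢 t)ᵀ := by
    intro t
    have hX : 𝓑bar * ((2 : ℝ) • R)⁻¹ * Bᵀ * 𝓢 t =
        Matrix.fromBlocks (B * ((2 : ℝ) • R)⁻¹ * Bᵀ * P₁₃ t)
          (B * ((2 : ℝ) • R)⁻¹ * Bᵀ * P₁₂ t) 0 0 := by
      rw [h𝓑bar, h𝓢 t, Matrix.fromRows_mul, Matrix.fromRows_mul, Matrix.zero_mul,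
        Matrix.zero_mul, Matrix.fromRows_mul_fromCols, Matrix.zero_mul, Matrix.zero_mul]
    rw [hX, h𝓛 t, h𝓐₀ t, hJ, hAbar t, hGbar t]
    rw [myFromBlocks_sub, Matrix.fromBlocks_transpose, Matrix.fromBlocks_transpose,
      Matrix.fromBlocks_multiply, Matrix.fromBlocks_multiply, Matrix.fromBlocks_inj]
    refine ⟨?_, ?_, ?_, ?_⟩
    · simp only [Matrix.zero_mul, Matrix.mul_zero, Matrix.one_mul, Matrix.mul_one,
        add_zero, zero_add]
      congr 1
      noncomm_ring
    · simp
    · simp only [Matrix.zero_mul, Matrix.mul_zero, Matrix.one_mul, Matrix.mul_one,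
        add_zero, zero_add, sub_zero]
    · simp only [Matrix.zero_mul, Matrix.mul_zero, Matrix.one_mul, Matrix.mul_one,
        add_zero, zero_add, sub_zero]
  -- identity M2
  have hJB : J * 𝓑₀ = 𝓑bar₀ := by
    rw [hJ, h𝓑₀, h𝓑bar₀, Matrix.fromBlocks_mul_fromRows]
    simp
  have hBJ : 𝓑₀ᵀ * J = 𝓑bar₀ᵀ := by
    calc 𝓑₀ᵀ * J = 𝓑₀ᵀ * Jᵀ := by rw [hJT]
      _ = (J * 𝓑₀)ᵀ := (Matrix.transpose_mul _ _).symm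
      _ = 𝓑bar₀ᵀ := by rw [hJB]
  have hM2 : ∀ t, J * (P₀ t * 𝓑₀ * ((2 : ℝ) • R₀)⁻¹ * 𝓑₀ᵀ) * J
      = K t * 𝓑bar₀ * ((2 : ℝ) • R₀)⁻¹ * 𝓑bar₀ᵀ := by
    intro t
    have h1 : J * (P₀ t * 𝓑₀ * ((2 : ℝ) • R₀)⁻¹ * 𝓑₀ᵀ) * J
        = (J * P₀ t * J) * (J * 𝓑₀) * ((2 : ℝ) • R₀)⁻¹ * (𝓑₀ᵀ * J) := by
      simp only [Matrix.mul_assoc]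
      rw [← Matrix.mul_assoc J J, hJJ, Matrix.one_mul]
    rw [h1, hJB, hBJ, hK t]
  -- identity for 𝓜₀
  have h𝓜eq : ∀ t, 𝓜₀ t = -((J * (𝓑bar * ((2 : ℝ) • R)⁻¹ * Bᵀ)) *ᵥ s₁ t) := by
    intro t
    rw [h𝓜₀ t, hJ, h𝓑bar, Matrix.fromRows_mul, Matrix.fromRows_mul, Matrix.zero_mul,
      Matrix.zero_mul, Matrix.fromBlocks_mul_fromRows]
    funext i
    cases i with
    | inl a => simp
    | inr a => simp
  -- the vector Vs and Vk
  set Vs : ℝ → (Fin n ⊕ Fin n) → ℝ := fun t =>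
    (-(((𝓐₀ t)ᵀ - P₀ t * 𝓑₀ * ((2 : ℝ) • R₀)⁻¹ * 𝓑₀ᵀ) *ᵥ s₀ t
        + P₀ t *ᵥ 𝓜₀ t - (2 : ℝ) • ηbar₀)) with hVs
  set Vk : ℝ → (Fin n ⊕ Fin n) → ℝ := fun t =>
    (-((𝓛 t - 𝓑bar * ((2 : ℝ) • R)⁻¹ * Bᵀ * 𝓢 t)ᵀ *ᵥ k t
        - (K t * 𝓑bar₀ * ((2 : ℝ) • R₀)⁻¹ * 𝓑bar₀ᵀ) *ᵥ k t
        - (K t * 𝓑bar * ((2 : ℝ) • R)⁻¹ * Bᵀ) *ᵥ s₁ t + (2 : ℝ) • f₀)) with hVk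
  have key : ∀ t, J *ᵥ Vs t = Vk t := by
    intro t
    have h1 : J *ᵥ (((𝓐₀ t)ᵀ - P₀ t * 𝓑₀ * ((2 : ℝ) • R₀)⁻¹ * 𝓑₀ᵀ) *ᵥ s₀ t)
        = ((𝓛 t - 𝓑bar * ((2 : ℝ) • R)⁻¹ * Bᵀ * 𝓢 t)ᵀ
            - K t * 𝓑bar₀ * ((2 : ℝ) • R₀)⁻¹ * 𝓑bar₀ᵀ) *ᵥ k t := by
      rw [hk t, Matrix.mulVec_mulVec, Matrix.mulVec_mulVec]
      congr 1
      have h2 : (𝓛 t - 𝓑bar * ((2 : ℝ) • R)⁻¹ * Bᵀ * 𝓢 t)ᵀ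
          - K t * 𝓑bar₀ * ((2 : ℝ) • R₀)⁻¹ * 𝓑bar₀ᵀ
          = J * ((𝓐₀ t)ᵀ - P₀ t * 𝓑₀ * ((2 : ℝ) • R₀)⁻¹ * 𝓑₀ᵀ) * J := by
        rw [Matrix.mul_sub, Matrix.sub_mul, hM1 t, hM2 t]
      rw [h2, Matrix.mul_assoc (J * _) J J, hJJ, Matrix.mul_one]
    have h2 : J *ᵥ (P₀ t *ᵥ 𝓜₀ t) = -((K t * 𝓑bar * ((2 : ℝ) • R)⁻¹ * Bᵀ) *ᵥ s₁ t) := by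
      rw [h𝓜eq t, Matrix.mulVec_neg, Matrix.mulVec_neg, Matrix.mulVec_mulVec,
        Matrix.mulVec_mulVec]
      congr 2
      rw [hK t]
      simp only [Matrix.mul_assoc]
    have h3 : J *ᵥ ((2 : ℝ) • ηbar₀) = -((2 : ℝ) • f₀) := by
      rw [Matrix.mulVec_smul]
      have h4 : J *ᵥ ηbar₀ = -f₀ := by
        rw [hJ, hηbar₀, hf₀]
        funext i
        cases i with
        | inl a => simp [Matrix.fromBlocks_mulVec]
        | inr a => simp [Matrix.fromBlocks_mulVec]
      rw [h4, smul_neg]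
    rw [hVs, hVk]
    simp only
    rw [Matrix.mulVec_neg, Matrix.mulVec_sub, Matrix.mulVec_add, h1, h2, h3,
      Matrix.sub_mulVec]
    abel
  have key2 : ∀ t, J *ᵥ Vk t = Vs t := by
    intro t
    rw [← key t, Matrix.mulVec_mulVec, hJJ, Matrix.one_mulVec]
  have hs₀k : ∀ t, s₀ t = J *ᵥ k t := by
    intro t
    rw [hk t, Matrix.mulVec_mulVec, hJJ, Matrix.one_mulVec]
  constructor
  · rintro ⟨h1, hT0⟩
    refine ⟨?_, ?_⟩
    · intro t ht i
      have hfun : (fun τ => k τ i) = fun τ => s₀ τ (Sum.elim Sum.inr Sum.inl i) :=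
        funext fun τ => by rw [hk τ, hswap]
      rw [hfun]
      have hd := h1 t ht (Sum.elim Sum.inr Sum.inl i)
      convert hd using 1
      rw [show (-((𝓛 t - 𝓑bar * ((2 : ℝ) • R)⁻¹ * Bᵀ * 𝓢 t)ᵀ *ᵥ k t
            - (K t * 𝓑bar₀ * ((2 : ℝ) • R₀)⁻¹ * 𝓑bar₀ᵀ) *ᵥ k t
            - (K t * 𝓑bar * ((2 : ℝ) • R)⁻¹ * Bᵀ) *ᵥ s₁ t + (2 : ℝ) • f₀)) i
          = (J *ᵥ Vs t) i from by rw [key t]]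
      rw [hswap]
    · rw [hk T, hT0, Matrix.mulVec_zero]
  · rintro ⟨h1, hT0⟩
    refine ⟨?_, ?_⟩
    · intro t ht i
      have hfun : (fun τ => s₀ τ i) = fun τ => k τ (Sum.elim Sum.inr Sum.inl i) :=
        funext fun τ => by rw [hs₀k τ, hswap]
      rw [hfun]
      have hd := h1 t ht (Sum.elim Sum.inr Sum.inl i)
      convert hd using 1
      rw [show (-(((𝓐₀ t)ᵀ - P₀ t * 𝓑₀ * ((2 : ℝ) • R₀)⁻¹ * 𝓑₀ᵀ) *ᵥ s₀ t
            + P₀ t *ᵥ 𝓜₀ t - (2 : ℝ) • ηbar₀)) i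
          = (J *ᵥ Vk t) i from by rw [key2 t]]
      rw [hswap]
    · rw [hs₀k T, hT0, Matrix.mulVec_zero]
end

section
/- Let Π₁₁ : ℝ → ℝ^{n×n} and Π₀ : ℝ → ℝ^{2n×2n} be continuous, let 𝔸₀ : ℝ → ℝ^{2n×2n} be continuous, and set K(t) := 𝔦Π₀(t)𝔦. Suppose the consistency relation 𝔦𝔸₀(t)𝔦 = 𝕃(t) − 𝔹̄(2R)⁻¹Bᵀ𝕊(t) holds for all t, where for a differentiable Π̄₁₂ : ℝ → ℝ^{n×2n} we set 𝕊(t) := Π̄₁₂(t)𝔦 and 𝕃(t) := [[A + F − B(2R)⁻¹BᵀΠ₁₁(t), G], [F₀, A₀]]. Then Π̄₁₂ satisfies −(d/dt)Π̄₁₂(t) = Π₁₁(t)[G F] + AᵀΠ̄₁₂(t) + Π̄₁₂(t)(𝔸₀(t) − 𝔹₀(2R₀)⁻¹𝔹₀ᵀΠ₀(t)) − Π₁₁(t)B(2R)⁻¹BᵀΠ̄₁₂(t) − 2Q[H Ĥ] on [0,T] with Π̄₁₂(T) = 0 if and only if 𝕊 satisfies −𝕊̇(t) = 𝕊(t)(𝕃(t)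 − 𝔹̄(2R)⁻¹Bᵀ𝕊(t)) − 𝕊(t)𝔹̄₀(2R₀)⁻¹𝔹̄₀ᵀK(t) + (Aᵀ − Π₁₁(t)B(2R)⁻¹Bᵀ)𝕊(t) + [Π₁₁(t)F − 2QĤ, Π₁₁(t)G − 2QH] on [0,T] with 𝕊(T) = 0. -/
open Matrix Set

/-- The minor agent's off-diagonal-block consistency equation of
the Nash certainty equivalence approach is equivalent, under right
multiplication by the block-swap matrix `𝔦`, to the consistency equation for
`𝕊` of the probabilistic approach. -/
theorem minor_offdiagonal_equivalence
    (n m : ℕ) (hn : 0 < n) (hm : 0 < m) (T : ℝ) (hT : 0 < T)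
    (A₀ F₀ A F G Q H Hhat : Matrix (Fin n) (Fin n) ℝ)
    (B₀ B : Matrix (Fin n) (Fin m) ℝ)
    (R₀ R : Matrix (Fin m) (Fin m) ℝ) (hR₀ : IsUnit R₀.det) (hR : IsUnit R.det)
    (𝓑₀ : Matrix (Fin n ⊕ Fin n) (Fin m) ℝ) (h𝓑₀ : 𝓑₀ = Matrix.fromRows B₀ 0)
    (𝓑bar : Matrix (Fin n ⊕ Fin n) (Fin m) ℝ) (h𝓑bar : 𝓑bar = Matrix.fromRows B 0)
    (𝓑bar₀ : Matrix (Fin n ⊕ Fin n) (Fin m) ℝ) (h𝓑bar₀ : 𝓑bar₀ = Matrix.fromRows 0 B₀)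
    (J : Matrix (Fin n ⊕ Fin n) (Fin n ⊕ Fin n) ℝ)
    (hJ : J = Matrix.fromBlocks 0 (1 : Matrix (Fin n) (Fin n) ℝ)
        (1 : Matrix (Fin n) (Fin n) ℝ) 0)
    (P₁₁ : ℝ → Matrix (Fin n) (Fin n) ℝ) (hP₁₁ : Continuous P₁₁)
    (P₀ : ℝ → Matrix (Fin n ⊕ Fin n) (Fin n ⊕ Fin n) ℝ) (hP₀ : Continuous P₀)
    (𝓐₀ : ℝ → Matrix (Fin n ⊕ Fin n) (Fin n ⊕ Fin n) ℝ) (h𝓐₀ : Continuous 𝓐₀)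
    (K : ℝ → Matrix (Fin n ⊕ Fin n) (Fin n ⊕ Fin n) ℝ)
    (hK : ∀ t, K t = J * P₀ t * J)
    (Pb₁₂ : ℝ → Matrix (Fin n) (Fin n ⊕ Fin n) ℝ)
    (hdiff : ∀ t ∈ Icc (0 : ℝ) T, ∀ i j, DifferentiableAt ℝ (fun τ => Pb₁₂ τ i j) t)
    (𝓢 : ℝ → Matrix (Fin n) (Fin n ⊕ Fin n) ℝ)
    (h𝓢 : ∀ t, 𝓢 t = Pb₁₂ t * J)
    (𝓛 : ℝ → Matrix (Fin n ⊕ Fin n) (Fin n ⊕ Fin n) ℝ)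
    (h𝓛 : ∀ t, 𝓛 t =
      Matrix.fromBlocks (A + F - B * ((2 : ℝ) • R)⁻¹ * Bᵀ * P₁₁ t) G F₀ A₀)
    (hconsistent : ∀ t, J * 𝓐₀ t * J = 𝓛 t - 𝓑bar * ((2 : ℝ) • R)⁻¹ * Bᵀ * 𝓢 t) :
    ((∀ t ∈ Icc (0 : ℝ) T, ∀ i j, HasDerivAt (fun τ => Pb₁₂ τ i j)
        ((-(P₁₁ t * Matrix.fromCols G F + Aᵀ * Pb₁₂ t
            + Pb₁₂ t * (𝓐₀ t - 𝓑₀ * ((2 : ℝ) • R₀)⁻¹ * 𝓑₀ᵀ * P₀ t)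
            - P₁₁ t * B * ((2 : ℝ) • R)⁻¹ * Bᵀ * Pb₁₂ t
            - (2 : ℝ) • (Q * Matrix.fromCols H Hhat))) i j) t)
      ∧ Pb₁₂ T = 0)
    ↔ ((∀ t ∈ Icc (0 : ℝ) T, ∀ i j, HasDerivAt (fun τ => 𝓢 τ i j)
        ((-(𝓢 t * (𝓛 t - 𝓑bar * ((2 : ℝ) • R)⁻¹ * Bᵀ * 𝓢 t)
            - 𝓢 t * 𝓑bar₀ * ((2 : ℝ) • R₀)⁻¹ * 𝓑bar₀ᵀ * K t
            + (Aᵀ - P₁₁ t * B * ((2 : ℝ) • R)⁻¹ * Bᵀ) * 𝓢 t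
            + Matrix.fromCols (P₁₁ t * F - (2 : ℝ) • (Q * Hhat))
                (P₁₁ t * G - (2 : ℝ) • (Q * H)))) i j) t)
      ∧ 𝓢 T = 0) := by
  -- basic facts about J
  have hJJ : J * J = 1 := by
    rw [hJ, Matrix.fromBlocks_multiply]
    simp [← Matrix.fromBlocks_one]
  have hJT : Jᵀ = J := by
    rw [hJ, Matrix.fromBlocks_transpose]
    simp
  have hPb : ∀ t, Pb₁₂ t = 𝓢 t * J := by
    intro t
    rw [h𝓢 t, Matrix.mul_assoc, hJJ, Matrix.mul_one]
  -- entrywise action of right multiplication by J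
  have hE : ∀ (M : Matrix (Fin n) (Fin n ⊕ Fin n) ℝ) (i : Fin n) (j : Fin n ⊕ Fin n),
      (M * J) i j = M i j.swap := by
    intro M i j
    cases j with
    | inl j =>
        simp [Matrix.mul_apply, hJ, Fintype.sum_sum_type, Matrix.one_apply,
          Finset.sum_ite_eq', Sum.swap]
    | inr j =>
        simp [Matrix.mul_apply, hJ, Fintype.sum_sum_type, Matrix.one_apply,
          Finset.sum_ite_eq', Sum.swap]
  -- column-swap for fromColumns
  have hcolJ : ∀ X Y : Matrix (Fin n) (Fin n) ℝ,
      Matrix.fromCols X Y * J = Matrix.fromCols Y X := by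
    intro X Y
    rw [hJ, Matrix.fromCols_mul_fromBlocks]
    simp
  -- J swaps the block rows of 𝓑₀
  have hJB : J * 𝓑₀ = 𝓑bar₀ := by
    rw [hJ, h𝓑₀, h𝓑bar₀, Matrix.fromBlocks_mul_fromRows]
    simp
  have hBT : 𝓑bar₀ᵀ = 𝓑₀ᵀ * J := by
    rw [← hJB, Matrix.transpose_mul, hJT]
  -- the key matrix identity: the NCE drift times J equals the 𝕊 drift
  have key : ∀ t,
      (-(P₁₁ t * Matrix.fromCols G F + Aᵀ * Pb₁₂ t
          + Pb₁₂ t * (𝓐₀ t - 𝓑₀ * ((2 : ℝ) • R₀)⁻¹ * 𝓑₀ᵀ * P₀ t)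
          - P₁₁ t * B * ((2 : ℝ) • R)⁻¹ * Bᵀ * Pb₁₂ t
          - (2 : ℝ) • (Q * Matrix.fromCols H Hhat))) * J
      = -(𝓢 t * (𝓛 t - 𝓑bar * ((2 : ℝ) • R)⁻¹ * Bᵀ * 𝓢 t)
          - 𝓢 t * 𝓑bar₀ * ((2 : ℝ) • R₀)⁻¹ * 𝓑bar₀ᵀ * K t
          + (Aᵀ - P₁₁ t * B * ((2 : ℝ) • R)⁻¹ * Bᵀ) * 𝓢 t
          + Matrix.fromCols (P₁₁ t * F - (2 : ℝ) • (Q * Hhat))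
              (P₁₁ t * G - (2 : ℝ) • (Q * H))) := by
    intro t
    have hmid : Pb₁₂ t * (𝓐₀ t - 𝓑₀ * ((2 : ℝ) • R₀)⁻¹ * 𝓑₀ᵀ * P₀ t) * J
        = 𝓢 t * (𝓛 t - 𝓑bar * ((2 : ℝ) • R)⁻¹ * Bᵀ * 𝓢 t)
          - 𝓢 t * 𝓑bar₀ * ((2 : ℝ) • R₀)⁻¹ * 𝓑bar₀ᵀ * K t := by
      have cancel : ∀ X : Matrix (Fin n ⊕ Fin n) (Fin n ⊕ Fin n) ℝ, J * (J * X) = X := by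
        intro X; rw [← Matrix.mul_assoc, hJJ, Matrix.one_mul]
      have h1 : 𝓢 t * 𝓑bar₀ * ((2 : ℝ) • R₀)⁻¹ * 𝓑bar₀ᵀ * K t
          = 𝓢 t * (J * (𝓑₀ * ((2 : ℝ) • R₀)⁻¹ * 𝓑₀ᵀ * P₀ t) * J) := by
        rw [hBT, ← hJB, hK t]
        simp only [Matrix.mul_assoc, cancel]
      rw [hPb t, h1]
      rw [show 𝓢 t * J * (𝓐₀ t - 𝓑₀ * ((2 : ℝ) • R₀)⁻¹ * 𝓑₀ᵀ * P₀ t) * J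
          = 𝓢 t * (J * 𝓐₀ t * J) - 𝓢 t * (J * (𝓑₀ * ((2 : ℝ) • R₀)⁻¹ * 𝓑₀ᵀ * P₀ t) * J) by
        simp only [Matrix.mul_sub, Matrix.sub_mul, Matrix.mul_assoc]]
      rw [hconsistent t]
    have hfc : Matrix.fromCols (P₁₁ t * F - (2 : ℝ) • (Q * Hhat))
          (P₁₁ t * G - (2 : ℝ) • (Q * H))
        = P₁₁ t * Matrix.fromCols F G - (2 : ℝ) • (Q * Matrix.fromCols Hhat H) := by
      rw [Matrix.mul_fromCols, Matrix.mul_fromCols]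
      ext i j
      cases j <;> simp [Matrix.fromCols]
    rw [Matrix.neg_mul, Matrix.sub_mul, Matrix.sub_mul, Matrix.add_mul, Matrix.add_mul]
    rw [hmid]
    rw [show P₁₁ t * Matrix.fromCols G F * J = P₁₁ t * Matrix.fromCols F G by
      rw [Matrix.mul_assoc, hcolJ]]
    rw [show Aᵀ * Pb₁₂ t * J = Aᵀ * 𝓢 t by rw [Matrix.mul_assoc, ← h𝓢 t]]
    rw [show P₁₁ t * B * ((2 : ℝ) • R)⁻¹ * Bᵀ * Pb₁₂ t * J
        = P₁₁ t * B * ((2 : ℝ) • R)⁻¹ * Bᵀ * 𝓢 t by rw [Matrix.mul_assoc, ← h𝓢 t]]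
    rw [show ((2 : ℝ) • (Q * Matrix.fromCols H Hhat)) * J
        = (2 : ℝ) • (Q * Matrix.fromCols Hhat H) by
      rw [Matrix.smul_mul, Matrix.mul_assoc, hcolJ]]
    rw [hfc, Matrix.sub_mul]
    abel
  constructor
  · rintro ⟨hderiv, hterm⟩
    constructor
    · intro t ht i j
      have h1 : (fun τ => 𝓢 τ i j) = fun τ => Pb₁₂ τ i j.swap := by
        funext τ
        rw [h𝓢 τ, hE]
      have h2 := hderiv t ht i j.swap
      rw [h1]
      have h3 : (-(𝓢 t * (𝓛 t - 𝓑bar * ((2 : ℝ) • R)⁻¹ * Bᵀ * 𝓢 t)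
            - 𝓢 t * 𝓑bar₀ * ((2 : ℝ) • R₀)⁻¹ * 𝓑bar₀ᵀ * K t
            + (Aᵀ - P₁₁ t * B * ((2 : ℝ) • R)⁻¹ * Bᵀ) * 𝓢 t
            + Matrix.fromCols (P₁₁ t * F - (2 : ℝ) • (Q * Hhat))
                (P₁₁ t * G - (2 : ℝ) • (Q * H)))) i j
          = (-(P₁₁ t * Matrix.fromCols G F + Aᵀ * Pb₁₂ t
            + Pb₁₂ t * (𝓐₀ t - 𝓑₀ * ((2 : ℝ) • R₀)⁻¹ * 𝓑₀ᵀ * P₀ t)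
            - P₁₁ t * B * ((2 : ℝ) • R)⁻¹ * Bᵀ * Pb₁₂ t
            - (2 : ℝ) • (Q * Matrix.fromCols H Hhat))) i j.swap := by
        rw [← key t, hE]
      rw [h3]
      exact h2
    · rw [h𝓢 T, hterm, Matrix.zero_mul]
  · rintro ⟨hderiv, hterm⟩
    constructor
    · intro t ht i j
      have h1 : (fun τ => Pb₁₂ τ i j) = fun τ => 𝓢 τ i j.swap := by
        funext τ
        rw [hPb τ, hE]
      have h2 := hderiv t ht i j.swap
      have h3 : (-(P₁₁ t * Matrix.fromCols G F + Aᵀ * Pb₁₂ t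
            + Pb₁₂ t * (𝓐₀ t - 𝓑₀ * ((2 : ℝ) • R₀)⁻¹ * 𝓑₀ᵀ * P₀ t)
            - P₁₁ t * B * ((2 : ℝ) • R)⁻¹ * Bᵀ * Pb₁₂ t
            - (2 : ℝ) • (Q * Matrix.fromCols H Hhat))) i j
          = (-(𝓢 t * (𝓛 t - 𝓑bar * ((2 : ℝ) • R)⁻¹ * Bᵀ * 𝓢 t)
            - 𝓢 t * 𝓑bar₀ * ((2 : ℝ) • R₀)⁻¹ * 𝓑bar₀ᵀ * K t
            + (Aᵀ - P₁₁ t * B * ((2 : ℝ) • R)⁻¹ * Bᵀ) * 𝓢 t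
            + Matrix.fromCols (P₁₁ t * F - (2 : ℝ) • (Q * Hhat))
                (P₁₁ t * G - (2 : ℝ) • (Q * H)))) i j.swap := by
        have h4 := congrArg (fun M => M * J) (key t)
        beta_reduce at h4
        rw [Matrix.mul_assoc, hJJ, Matrix.mul_one] at h4
        rw [h4, hE]
      rw [h1, h3]
      exact h2
    · rw [hPb T, hterm, Matrix.zero_mul]
end
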